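/- Let Γ be a triangulation of the n-gon and let u be a function from the edges of Γ to ℝ satisfying the triangle inequalities of Γ. Then there exist points P_0, P_1, …, P_{n−1} in the Euclidean plane ℝ² such that ‖P_p − P_q‖ = u({p,q}) for every edge {p,q} of Γ. -/

import Mathlib

open Classical

/-- `IsSide n p q` : the pair `{p, q}` (with `p < q`) is a side of the convex `n`-gon with
vertices labeled `0, 1, …, n-1`; the sides are `e_i = {i-1, i}` for `i = 1, …, n-1`
together with `e_n = {0, n-1}`. -/
def IsSide (n p q : ℕ) : Prop :=
  p < q ∧ q < n ∧ (q = p + 1 ∨ (p = 0 ∧ q = n - 1))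

/-- `IsDiag n p q` : the pair `{p, q}` (with `p < q`) is a diagonal of the `n`-gon, i.e.
a pair of distinct vertices which is not a side. -/
def IsDiag (n p q : ℕ) : Prop :=
  p < q ∧ q < n ∧ ¬(q = p + 1 ∨ (p = 0 ∧ q = n - 1))

/-- Two diagonals `{p, q}` (`p < q`) and `{p', q'}` (`p' < q'`) cross if
`p < p' < q < q'` or `p' < p < q' < q`. -/
def Crosses (d d' : ℕ × ℕ) : Prop :=
  (d.1 < d'.1 ∧ d'.1 < d.2 ∧ d.2 < d'.2) ∨ (d'.1 < d.1 ∧ d.1 < d'.2 ∧ d'.2 < d.2)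

/-- A triangulation of the `n`-gon: a set of `n - 3` pairwise non-crossing diagonals. -/
def IsTriangulation (n : ℕ) (D : Finset (ℕ × ℕ)) : Prop :=
  D.card = n - 3 ∧ (∀ d ∈ D, IsDiag n d.1 d.2) ∧
    ∀ d ∈ D, ∀ d' ∈ D, d ≠ d' → ¬Crosses d d'

/-- The edges of the triangulation with diagonal set `D`: the sides of the `n`-gon
together with the diagonals in `D`. -/
def IsEdge (n : ℕ) (D : Finset (ℕ × ℕ)) (p q : ℕ) : Prop :=
  IsSide n p q ∨ (p, q) ∈ D

/-- A triangle of the triangulation: vertices `p < q < r` such that all three pairs are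
edges. -/
def IsTriangleOf (n : ℕ) (D : Finset (ℕ × ℕ)) (p q r : ℕ) : Prop :=
  p < q ∧ q < r ∧ IsEdge n D p q ∧ IsEdge n D q r ∧ IsEdge n D p r

/-- A function `u` on edges (given on ordered pairs) satisfies the triangle inequalities of
the triangulation if for every triangle with edges `a, b, c` one has
`|u a - u b| ≤ u c ≤ u a + u b`. -/
def SatisfiesTriangleIneqs (n : ℕ) (D : Finset (ℕ × ℕ)) (u : ℕ × ℕ → ℝ) : Prop :=
  ∀ p q r : ℕ, IsTriangleOf n D p q r →
    |u (p, q) - u (q, r)| ≤ u (p, r) ∧ u (p, r) ≤ u (p, q) + u (q, r)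

section AuxRealizable
set_option maxHeartbeats 1000000

noncomputable abbrev Pl := EuclideanSpace ℝ (Fin 2)

lemma norm_pl (w : Pl) : ‖w‖ = Real.sqrt (w 0 ^ 2 + w 1 ^ 2) := by
  rw [EuclideanSpace.norm_eq, Fin.sum_univ_two]
  simp [sq_abs]

lemma mkpt_apply0 (s t : ℝ) : (show Pl from WithLp.toLp 2 (fun i : Fin 2 => if i = 0 then s else t)) 0 = s := by simp
lemma mkpt_apply1 (s t : ℝ) : (show Pl from WithLp.toLp 2 (fun i : Fin 2 => if i = 0 then s else t)) 1 = t := by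
  show (if (1:Fin 2) = 0 then s else t) = t
  norm_num

lemma exists_third_point (A B : Pl) (a b : ℝ) (ha : 0 ≤ a) (hb : 0 ≤ b)
    (h1 : |a - b| ≤ ‖A - B‖) (h2 : ‖A - B‖ ≤ a + b) :
    ∃ P : Pl, ‖P - A‖ = a ∧ ‖P - B‖ = b := by
  set c := ‖A - B‖ with hc
  have hc0 : 0 ≤ c := norm_nonneg _
  have habs := abs_le.mp h1
  rcases eq_or_lt_of_le hc0 with hc0' | hcpos
  · have hAB : A = B := by
      have : ‖A - B‖ = 0 := hc0'.symm
      rwa [norm_sub_eq_zero_iff] at this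
    have hab : a = b := by
      have h1' : |a - b| ≤ 0 := h1.trans hc0'.ge
      have : |a - b| = 0 := le_antisymm h1' (abs_nonneg _)
      have := abs_eq_zero.mp this
      linarith
    refine ⟨A + a • EuclideanSpace.single (0 : Fin 2) (1:ℝ), ?_, ?_⟩
    · simp [norm_smul, abs_of_nonneg ha]
    · rw [← hAB]; simp [norm_smul, abs_of_nonneg ha, ← hab, abs_of_nonneg ha]
  · set x := (c^2 + a^2 - b^2) / (2*c) with hx
    have hxa : x ≤ a := by
      rw [hx, div_le_iff₀ (by linarith)]
      nlinarith [habs.1, habs.2, h2]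
    have hxa' : -a ≤ x := by
      rw [hx, le_div_iff₀ (by linarith)]
      nlinarith [habs.1, habs.2, h2]
    have hh2 : 0 ≤ a^2 - x^2 := by nlinarith
    set h := Real.sqrt (a^2 - x^2) with hhdef
    have hhsq : h^2 = a^2 - x^2 := Real.sq_sqrt hh2
    set d0 := (B - A) 0 with hd0
    set d1 := (B - A) 1 with hd1
    have hdc : d0^2 + d1^2 = c^2 := by
      have hnp := norm_pl (A - B)
      rw [← hc] at hnp
      have h0 : (A - B) 0 = -d0 := by simp [hd0]
      have h1' : (A - B) 1 = -d1 := by simp [hd1]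
      rw [h0, h1'] at hnp
      nlinarith [Real.sq_sqrt (by positivity : (0:ℝ) ≤ (-d0)^2 + (-d1)^2), hc0]
    have hxc : 2 * c * x = c^2 + a^2 - b^2 := by
      rw [hx]; field_simp
    set P : Pl := (show Pl from WithLp.toLp 2 (fun i : Fin 2 =>
      if i = 0 then A 0 + (x/c) * d0 + (h/c) * (-d1) else A 1 + (x/c) * d1 + (h/c) * d0))
      with hP
    have hP0 : P 0 = A 0 + (x/c) * d0 + (h/c) * (-d1) := by rw [hP]; exact mkpt_apply0 _ _
    have hP1 : P 1 = A 1 + (x/c) * d1 + (h/c) * d0 := by rw [hP]; exact mkpt_apply1 _ _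
    have hdA0 : d0 = B 0 - A 0 := by simp [hd0]
    have hdA1 : d1 = B 1 - A 1 := by simp [hd1]
    clear_value x h
    clear_value P
    refine ⟨P, ?_, ?_⟩
    · rw [norm_pl]
      have e0 : (P - A) 0 = (x/c) * d0 + (h/c) * (-d1) := by
        simp only [PiLp.sub_apply, hP0]; ring
      have e1 : (P - A) 1 = (x/c) * d1 + (h/c) * d0 := by
        simp only [PiLp.sub_apply, hP1]; ring
      rw [e0, e1]
      have key : ((x/c) * d0 + (h/c) * (-d1))^2 + ((x/c) * d1 + (h/c) * d0)^2 = a^2 := by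
        have hcne : c ≠ 0 := ne_of_gt hcpos
        have e : ((x/c) * d0 + (h/c) * (-d1))^2 + ((x/c) * d1 + (h/c) * d0)^2
            = ((x/c)^2 + (h/c)^2) * (d0^2 + d1^2) := by ring
        rw [e, hdc]
        have : ((x/c)^2 + (h/c)^2) * c^2 = x^2 + h^2 := by
          field_simp
        rw [this]; linarith [hhsq]
      rw [key, Real.sqrt_sq ha]
    · rw [norm_pl]
      have e0 : (P - B) 0 = (x/c - 1) * d0 + (h/c) * (-d1) := by
        simp only [PiLp.sub_apply, hP0, hdA0]; ring
      have e1 : (P - B) 1 = (x/c - 1) * d1 + (h/c) * d0 := by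
        simp only [PiLp.sub_apply, hP1, hdA1]; ring
      rw [e0, e1]
      have key : ((x/c - 1) * d0 + (h/c) * (-d1))^2 + ((x/c - 1) * d1 + (h/c) * d0)^2 = b^2 := by
        have hcne : c ≠ 0 := ne_of_gt hcpos
        have e : ((x/c - 1) * d0 + (h/c) * (-d1))^2 + ((x/c - 1) * d1 + (h/c) * d0)^2
            = ((x/c - 1)^2 + (h/c)^2) * (d0^2 + d1^2) := by ring
        rw [e, hdc]
        have : ((x/c - 1)^2 + (h/c)^2) * c^2 = (x - c)^2 + h^2 := by
          field_simp
        rw [this]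
        nlinarith [hhsq, hxc]
      rw [key, Real.sqrt_sq hb]

def phi (p x : ℕ) : ℕ := if x ≤ p then x else x - 1

lemma phi_lt {p x y : ℕ} (h : phi p x < phi p y) : x < y := by
  unfold phi at h; split_ifs at h <;> omega

lemma noncross_card : ∀ N n : ℕ, 3 ≤ n → ∀ E : Finset (ℕ × ℕ), E.card = N →
    (∀ d ∈ E, IsDiag n d.1 d.2) → (∀ d ∈ E, ∀ d' ∈ E, d ≠ d' → ¬Crosses d d') →
    E.card ≤ n - 3 := by
  intro N
  induction N with
  | zero => intro n hn E hcard _ _; omega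
  | succ N ih =>
    intro n hn E hcard hdiag hnc
    have hne : E.Nonempty := by
      rw [← Finset.card_pos, hcard]; omega
    obtain ⟨I, hIE, hImin⟩ := Finset.exists_min_image E (fun d => d.2 - d.1) hne
    obtain ⟨p, q⟩ := I
    obtain ⟨hpq, hqn, hns⟩ := hdiag _ hIE
    simp only at hpq hqn hns hImin
    have hq2 : p + 2 ≤ q := by omega
    have hnpq : ¬(p = 0 ∧ q = n - 1) := fun h => hns (Or.inr h)
    have hn4 : 4 ≤ n := by
      rcases Nat.lt_or_ge n 4 with h | h
      · exact absurd (by omega : p = 0 ∧ q = n - 1) hnpq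
      · exact h
    -- position claim for every other element
    have claim : ∀ a b : ℕ, (a, b) ∈ E.erase (p, q) →
        (b ≤ p) ∨ (p + 2 ≤ a) ∨ (a = p ∧ q + 1 ≤ b) ∨ (a < p ∧ q ≤ b) := by
      intro a b hJ
      have hJE := Finset.mem_of_mem_erase hJ
      have hJne := Finset.ne_of_mem_erase hJ
      obtain ⟨hab, hbn, hbs⟩ := hdiag _ hJE
      simp only at hab hbn hbs
      have hmin := hImin _ hJE
      simp only at hmin
      have hcr := hnc _ hIE _ hJE (Ne.symm hJne)
      unfold Crosses at hcr
      simp only [not_or, not_and] at hcr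
      have hJne' : ¬(a = p ∧ b = q) := by
        intro h; exact hJne (by simp [Prod.ext_iff, h.1, h.2])
      obtain ⟨h1, h2⟩ := hcr
      by_contra hcon
      push_neg at hcon
      omega
    set f : ℕ × ℕ → ℕ × ℕ := fun d => (phi p d.1, phi p d.2) with hf
    have hinj : Set.InjOn f (E.erase (p, q)) := by
      rintro ⟨a, b⟩ hJ ⟨a', b'⟩ hJ' heq
      have c1 := claim _ _ hJ
      have c2 := claim _ _ hJ'
      have hab : a < b := (hdiag _ (Finset.mem_of_mem_erase hJ)).1
      have hab' : a' < b' := (hdiag _ (Finset.mem_of_mem_erase hJ')).1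
      simp only [hf, Prod.ext_iff, phi] at heq ⊢
      obtain ⟨e1, e2⟩ := heq
      split_ifs at e1 e2 <;> omega
    have hcard' : ((E.erase (p, q)).image f).card = N := by
      rw [Finset.card_image_of_injOn hinj, Finset.card_erase_of_mem hIE, hcard]
      omega
    have hdiag' : ∀ d ∈ (E.erase (p, q)).image f, IsDiag (n - 1) d.1 d.2 := by
      intro d hd
      obtain ⟨⟨a, b⟩, hJ, rfl⟩ := Finset.mem_image.mp hd
      have hc := claim _ _ hJ
      obtain ⟨hab, hbn, hbs⟩ := hdiag _ (Finset.mem_of_mem_erase hJ)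
      simp only at hab hbn hbs
      simp only [hf, IsDiag, phi, not_or, not_and]
      rw [not_or] at hbs
      split_ifs <;> omega
    have hnc' : ∀ d ∈ (E.erase (p, q)).image f, ∀ d' ∈ (E.erase (p, q)).image f,
        d ≠ d' → ¬Crosses d d' := by
      intro d hd d' hd' hdd' hcr
      obtain ⟨J, hJ, rfl⟩ := Finset.mem_image.mp hd
      obtain ⟨J', hJ', rfl⟩ := Finset.mem_image.mp hd'
      have hJJ' : J ≠ J' := fun h => hdd' (by rw [h])
      refine hnc _ (Finset.mem_of_mem_erase hJ) _ (Finset.mem_of_mem_erase hJ') hJJ' ?_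
      unfold Crosses at hcr ⊢
      rcases hcr with ⟨u1, u2, u3⟩ | ⟨u1, u2, u3⟩
      · exact Or.inl ⟨phi_lt u1, phi_lt u2, phi_lt u3⟩
      · exact Or.inr ⟨phi_lt u1, phi_lt u2, phi_lt u3⟩
    have := ih (n - 1) (by omega) _ hcard' hdiag' hnc'
    omega

-- ===== combinatorial lemmas =====

lemma edge_lt {n : ℕ} {D : Finset (ℕ × ℕ)} (hD : IsTriangulation n D) {p q : ℕ}
    (h : IsEdge n D p q) : p < q ∧ q < n := by
  rcases h with ⟨h1, h2, _⟩ | h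
  · exact ⟨h1, h2⟩
  · have := hD.2.1 _ h
    exact ⟨this.1, this.2.1⟩

lemma crosses_symm {d d' : ℕ × ℕ} (h : Crosses d d') : Crosses d' d := by
  unfold Crosses at *; tauto

lemma diag_crosses {n : ℕ} (hn : 3 ≤ n) {D : Finset (ℕ × ℕ)} (hD : IsTriangulation n D)
    {p q : ℕ} (hpq : IsDiag n p q) (hnotin : (p, q) ∉ D) :
    ∃ d ∈ D, Crosses d (p, q) := by
  by_contra hcon
  push_neg at hcon
  have hcard : (insert (p, q) D).card = n - 2 := by
    rw [Finset.card_insert_of_notMem hnotin, hD.1]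
    have : 4 ≤ n := by
      rcases hpq with ⟨h1, h2, h3⟩
      rcases Nat.lt_or_ge n 4 with h | h
      · exact absurd (Or.inr (by omega)) h3
      · exact h
    omega
  have hdiag : ∀ d ∈ insert (p, q) D, IsDiag n d.1 d.2 := by
    intro d hd
    rcases Finset.mem_insert.mp hd with rfl | hd
    · exact hpq
    · exact hD.2.1 _ hd
  have hnc : ∀ d ∈ insert (p, q) D, ∀ d' ∈ insert (p, q) D, d ≠ d' → ¬Crosses d d' := by
    intro d hd d' hd' hne
    rcases Finset.mem_insert.mp hd with rfl | hd <;>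
      rcases Finset.mem_insert.mp hd' with rfl | hd'
    · exact absurd rfl hne
    · intro hc; exact hcon _ hd' (crosses_symm hc)
    · exact hcon _ hd
    · exact hD.2.2 _ hd _ hd' hne
  have := noncross_card _ n hn _ rfl hdiag hnc
  omega

lemma split_edge {n : ℕ} (hn : 3 ≤ n) {D : Finset (ℕ × ℕ)} (hD : IsTriangulation n D)
    {p q : ℕ} (he : IsEdge n D p q) (h2 : p + 2 ≤ q) :
    ∃ k, p < k ∧ k < q ∧ IsEdge n D p k ∧ IsEdge n D k q := by
  have hlt := edge_lt hD he
  obtain ⟨hpq, hqn⟩ := hlt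
  -- (p,q) crosses nothing in D
  have hpqnc : ∀ d ∈ D, ¬Crosses d (p, q) := by
    intro d hd hc
    obtain ⟨hx1, hx2, hx3⟩ := hD.2.1 _ hd
    rcases he with ⟨_, _, hside⟩ | hmem
    · rcases hside with h | ⟨rfl, rfl⟩
      · omega
      · rcases hc with ⟨c1, c2, c3⟩ | ⟨c1, c2, c3⟩ <;> omega
    · rcases eq_or_ne d (p, q) with rfl | hne
      · rcases hc with ⟨c1, c2, c3⟩ | ⟨c1, c2, c3⟩ <;> simp at c1 c2 c3 <;> omega
      · exact hD.2.2 _ hd _ hmem hne hc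
  have hex : ∃ k, p < k ∧ k < q ∧ IsEdge n D k q :=
    ⟨q - 1, by omega, by omega, Or.inl ⟨by omega, hqn, Or.inl (by omega)⟩⟩
  obtain ⟨hpk, hkq, hekq⟩ := Nat.find_spec hex
  have hmin := fun j (hj : j < Nat.find hex) => Nat.find_min hex hj
  set k := Nat.find hex with hk
  clear_value k
  refine ⟨k, hpk, hkq, ?_, hekq⟩
  rcases eq_or_ne k (p + 1) with rfl | hkp1
  · exact Or.inl ⟨by omega, by omega, Or.inl rfl⟩
  have hdiagpk : IsDiag n p k := ⟨hpk, by omega, by omega⟩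
  by_cases hmem : (p, k) ∈ D
  · exact Or.inr hmem
  exfalso
  obtain ⟨d, hdD, hdc⟩ := diag_crosses hn hD hdiagpk hmem
  obtain ⟨hd1, hd2, hd3⟩ := hD.2.1 _ hdD
  have hnc1 := hpqnc _ hdD
  unfold Crosses at hdc hnc1
  rcases hdc with ⟨c1, c2, c3⟩ | ⟨c1, c2, c3⟩
  · -- d.1 < p < d.2 < k : d crosses (p,q)
    exact hnc1 (Or.inl ⟨c1, c2, by omega⟩)
  · -- p < d.1 < k < d.2
    have hd2q : d.2 ≤ q := by
      by_contra hgt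
      exact hnc1 (Or.inr ⟨by omega, by omega, by omega⟩)
    rcases eq_or_lt_of_le hd2q with heq | hlt2
    · -- d = (d.1, q) with p < d.1 < k : contradicts minimality of k
      have : IsEdge n D d.1 q := Or.inr (by rw [← heq]; exact hdD)
      exact hmin d.1 (by omega) ⟨by omega, by omega, this⟩
    · -- d crosses (k, q)
      rcases hekq with ⟨_, _, hside⟩ | hmem2
      · rcases hside with h | ⟨h0, _⟩ <;> omega
      · have hne : (k, q) ≠ d := by
          intro h
          rw [← h] at hlt2
          simp at hlt2
        exact hD.2.2 _ hmem2 _ hdD hne (Or.inr ⟨c2, c3, hlt2⟩)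

-- ===== placement =====

lemma place {n : ℕ} (hn : 3 ≤ n) {D : Finset (ℕ × ℕ)} (hD : IsTriangulation n D)
    {u : ℕ × ℕ → ℝ} (hu : SatisfiesTriangleIneqs n D u) :
    ∀ m : ℕ, ∀ p q : ℕ, q - p ≤ m → IsEdge n D p q →
    ∀ A B : Pl, ‖A - B‖ = u (p, q) →
    ∃ P : ℕ → Pl, P p = A ∧ P q = B ∧
      ∀ a b : ℕ, p ≤ a → b ≤ q → IsEdge n D a b → ‖P a - P b‖ = u (a, b) := by
  intro m
  induction m with
  | zero =>
    intro p q hm he A B hAB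
    have := edge_lt hD he
    omega
  | succ m ih =>
    intro p q hm he A B hAB
    obtain ⟨hpq0, hqn0⟩ := edge_lt hD he
    rcases Nat.lt_or_ge q (p + 2) with hq1 | hq2
    · -- q = p + 1
      have hq : q = p + 1 := by omega
      refine ⟨fun v => if v = p then A else B, ?_, ?_, ?_⟩
      · show (if p = p then A else B) = A
        rw [if_pos rfl]
      · show (if q = p then A else B) = B
        rw [if_neg (show ¬ q = p by omega)]
      · intro a b ha hb hab
        obtain ⟨hab1, hab2⟩ := edge_lt hD hab
        have hap : a = p := by omega
        have hbq : b = q := by omega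
        show ‖(if a = p then A else B) - (if b = p then A else B)‖ = u (a, b)
        rw [hap, hbq, if_pos rfl, if_neg (show ¬ q = p by omega)]
        exact hAB
    · obtain ⟨k, hpk, hkq, hepk, hekq⟩ := split_edge hn hD he hq2
      have htri : IsTriangleOf n D p k q := ⟨hpk, hkq, hepk, hekq, he⟩
      obtain ⟨t1, t2⟩ := hu p k q htri
      have habs := abs_le.mp t1
      have h0a : 0 ≤ u (p, k) := by linarith
      have h0b : 0 ≤ u (k, q) := by linarith
      obtain ⟨C, hCA, hCB⟩ := exists_third_point A B (u (p, k)) (u (k, q)) h0a h0b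
        (by rw [hAB]; exact t1) (by rw [hAB]; exact t2)
      obtain ⟨P₁, hP₁p, hP₁k, hP₁e⟩ := ih p k (by omega) hepk A C
        (by rw [norm_sub_rev]; exact hCA)
      obtain ⟨P₂, hP₂k, hP₂q, hP₂e⟩ := ih k q (by omega) hekq C B hCB
      refine ⟨fun v => if v ≤ k then P₁ v else P₂ v, ?_, ?_, ?_⟩
      · show (if p ≤ k then P₁ p else P₂ p) = A
        rw [if_pos (by omega : p ≤ k)]; exact hP₁p
      · show (if q ≤ k then P₁ q else P₂ q) = B
        rw [if_neg (by omega : ¬ q ≤ k)]; exact hP₂q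
      · intro a b ha hb hab
        obtain ⟨hab1, hab2⟩ := edge_lt hD hab
        show ‖(if a ≤ k then P₁ a else P₂ a) - (if b ≤ k then P₁ b else P₂ b)‖ = u (a, b)
        rcases Nat.lt_or_ge k b with hkb | hbk
        · rcases Nat.lt_or_ge a k with hak | hka
          · -- a < k < b : only possible if (a,b) = (p,q)
            have habpq : a = p ∧ b = q := by
              rcases hab with ⟨h1, h2, hside⟩ | hmem
              · rcases hside with h | ⟨ha0, hb0⟩
                · omega
                · constructor <;> omega
              · by_contra hcon
                rw [not_and_or] at hcon
                rcases eq_or_ne a p with heqa | hap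
                · have hbq : b ≠ q := by
                    rcases hcon with h | h
                    · exact absurd heqa h
                    · exact h
                  rcases hekq with ⟨_, _, hside⟩ | hmem2
                  · rcases hside with h | ⟨h0, _⟩ <;> omega
                  · have hne : (k, q) ≠ (a, b) := by
                      intro h
                      rw [Prod.mk.injEq] at h
                      omega
                    exact hD.2.2 _ hmem2 _ hmem hne (Or.inr ⟨by omega, by omega, by omega⟩)
                · rcases hepk with ⟨_, _, hside⟩ | hmem2
                  · rcases hside with h | ⟨h0, hk0⟩ <;> omega
                  · have hne : (p, k) ≠ (a, b) := by
                      intro h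
                      rw [Prod.mk.injEq] at h
                      omega
                    exact hD.2.2 _ hmem2 _ hmem hne (Or.inl ⟨by omega, by omega, by omega⟩)
            obtain ⟨rfl, rfl⟩ := habpq
            rw [if_pos (by omega : a ≤ k), if_neg (by omega : ¬ b ≤ k), hP₁p, hP₂q, hAB]
          · -- k ≤ a < b, use P₂
            have hPa : (if a ≤ k then P₁ a else P₂ a) = P₂ a := by
              rcases eq_or_ne a k with rfl | hne
              · rw [if_pos le_rfl, hP₁k, hP₂k]
              · rw [if_neg (by omega)]
            have hPb : (if b ≤ k then P₁ b else P₂ b) = P₂ b := by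
              rw [if_neg (by omega)]
            rw [hPa, hPb]
            exact hP₂e a b hka hb hab
        · -- b ≤ k, use P₁
          rw [if_pos (by omega : a ≤ k), if_pos hbk]
          exact hP₁e a b ha hbk hab

/-- Any assignment of lengths to the sides and diagonals of a triangulation of the `n`-gon
satisfying all the triangle inequalities is realized by an actual (possibly degenerate)
polygon in the Euclidean plane: there are points `P 0, …, P (n-1)` in `ℝ²` such that
`‖P p - P q‖ = u (p, q)` for every edge `{p, q}` of the triangulation. -/
theorem triangle_ineqs_realizable (n : ℕ) (hn : 3 ≤ n)
    (D : Finset (ℕ × ℕ)) (hD : IsTriangulation n D)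
    (u : ℕ × ℕ → ℝ) (hu : SatisfiesTriangleIneqs n D u) :
    ∃ P : ℕ → EuclideanSpace ℝ (Fin 2),
      ∀ p q : ℕ, IsEdge n D p q → ‖P p - P q‖ = u (p, q) := by
  have hedge : IsEdge n D 0 (n - 1) := Or.inl ⟨by omega, by omega, Or.inr ⟨rfl, rfl⟩⟩
  obtain ⟨k, hk1, hk2, he1, he2⟩ := split_edge hn hD hedge (by omega)
  obtain ⟨t1, t2⟩ := hu 0 k (n - 1) ⟨hk1, hk2, he1, he2, hedge⟩
  have h0 : 0 ≤ u (0, n - 1) := le_trans (abs_nonneg _) t1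
  set B : Pl := EuclideanSpace.single (0 : Fin 2) (u (0, n - 1)) with hB
  have hAB : ‖(0 : Pl) - B‖ = u (0, n - 1) := by
    simp [hB, abs_of_nonneg h0]
  obtain ⟨P, hP0, hPn, hPe⟩ := place hn hD hu (n - 1) 0 (n - 1) (by omega) hedge 0 B hAB
  refine ⟨P, fun p q he => ?_⟩
  have := edge_lt hD he
  exact hPe p q (by omega) (by omega) he

end AuxRealizable
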